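/- If f : ℝ ⇀ ℝ is an increasing injective partial function without fixed points, F is the closure of its graph in ℝ², and D = {x : (x,x) ∉ F, there is a unique y with (x,y) ∈ F, and for all x' < x, (x,y) ∈ F implies (x',y) ∉ F}, then dom(f) \ D is at most countable. -/

import Mathlib

open Set

/-- Points with a rational "left gap" witness form a countable set. -/
lemma bad_left_countable (f : ℝ → ℝ) (D : Set ℝ) :
    {x | x ∈ D ∧ ∃ q r : ℚ, (q : ℝ) < x ∧ (r : ℝ) < f x ∧
      ∀ t ∈ D, (q : ℝ) < t → t < x → f t < r}.Countable := by
  classical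
  set S := {x | x ∈ D ∧ ∃ q r : ℚ, (q : ℝ) < x ∧ (r : ℝ) < f x ∧
      ∀ t ∈ D, (q : ℝ) < t → t < x → f t < r} with hS
  have hex : ∀ x ∈ S, ∃ p : ℚ × ℚ, (p.1 : ℝ) < x ∧ (p.2 : ℝ) < f x ∧
      ∀ t ∈ D, (p.1 : ℝ) < t → t < x → f t < p.2 := by
    rintro x ⟨-, q, r, h1, h2, h3⟩
    exact ⟨(q, r), h1, h2, h3⟩
  set φ : ℝ → ℚ × ℚ := fun x => if h : x ∈ S then Classical.choose (hex x h) else default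
    with hφ
  have hinj : Set.InjOn φ S := by
    intro a ha b hb hab
    by_contra hne
    rcases lt_or_gt_of_ne hne with h | h
    · have hA := Classical.choose_spec (hex a ha)
      have hB := Classical.choose_spec (hex b hb)
      rw [hφ] at hab; simp only [dif_pos ha, dif_pos hb] at hab
      rw [hab] at hA
      -- a ∈ D, (q:ℝ) < a < b so f a < r, but r < f a
      have h1 : f a < (Classical.choose (hex b hb)).2 := hB.2.2 a ha.1 hA.1 h
      exact absurd hA.2.1 (not_lt.2 h1.le)
    · have hA := Classical.choose_spec (hex a ha)
      have hB := Classical.choose_spec (hex b hb)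
      rw [hφ] at hab; simp only [dif_pos ha, dif_pos hb] at hab
      rw [← hab] at hB
      have h1 : f b < (Classical.choose (hex a ha)).2 := hA.2.2 b hb.1 hB.1 h
      exact absurd hB.2.1 (not_lt.2 h1.le)
  exact (Set.mapsTo_univ φ S).countable_of_injOn hinj Set.countable_univ

/-- Points with a rational "right gap" witness form a countable set. -/
lemma bad_right_countable (f : ℝ → ℝ) (D : Set ℝ) :
    {x | x ∈ D ∧ ∃ q r : ℚ, x < (q : ℝ) ∧ f x < (r : ℝ) ∧
      ∀ t ∈ D, x < t → t < (q : ℝ) → (r : ℝ) < f t}.Countable := by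
  classical
  set S := {x | x ∈ D ∧ ∃ q r : ℚ, x < (q : ℝ) ∧ f x < (r : ℝ) ∧
      ∀ t ∈ D, x < t → t < (q : ℝ) → (r : ℝ) < f t} with hS
  have hex : ∀ x ∈ S, ∃ p : ℚ × ℚ, x < (p.1 : ℝ) ∧ f x < (p.2 : ℝ) ∧
      ∀ t ∈ D, x < t → t < (p.1 : ℝ) → (p.2 : ℝ) < f t := by
    rintro x ⟨-, q, r, h1, h2, h3⟩
    exact ⟨(q, r), h1, h2, h3⟩
  set φ : ℝ → ℚ × ℚ := fun x => if h : x ∈ S then Classical.choose (hex x h) else default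
    with hφ
  have hinj : Set.InjOn φ S := by
    intro a ha b hb hab
    by_contra hne
    rcases lt_or_gt_of_ne hne with h | h
    · have hA := Classical.choose_spec (hex a ha)
      have hB := Classical.choose_spec (hex b hb)
      rw [hφ] at hab; simp only [dif_pos ha, dif_pos hb] at hab
      rw [hab] at hA
      have h1 : ((Classical.choose (hex b hb)).2 : ℝ) < f b := hA.2.2 b hb.1 h hB.1
      exact absurd hB.2.1 (not_lt.2 h1.le)
    · have hA := Classical.choose_spec (hex a ha)
      have hB := Classical.choose_spec (hex b hb)
      rw [hφ] at hab; simp only [dif_pos ha, dif_pos hb] at hab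
      rw [← hab] at hB
      have h1 : ((Classical.choose (hex a ha)).2 : ℝ) < f a := hB.2.2 a ha.1 h hA.1
      exact absurd hA.2.1 (not_lt.2 h1.le)
  exact (Set.mapsTo_univ φ S).countable_of_injOn hinj Set.countable_univ

/-- If `f` is an increasing injective partial real function without fixed points,
`F` is the closure of its graph, and `D'` is the set of `x` with `(x,x) ∉ F`, a
unique `y` with `(x,y) ∈ F`, and no `x' < x` with `(x',y) ∈ F` for such `y`,
then `dom(f) \ D'` is at most countable. -/
theorem dom_diff_countable
    (f : ℝ → ℝ) (D : Set ℝ)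
    (hmono : MonotoneOn f D)
    (hinj : Set.InjOn f D)
    (hnofix : ∀ x ∈ D, f x ≠ x)
    (F : Set (ℝ × ℝ)) (hF : F = closure {p : ℝ × ℝ | p.1 ∈ D ∧ p.2 = f p.1})
    (D' : Set ℝ)
    (hD' : D' = {x : ℝ | (x, x) ∉ F ∧ (∃! y, (x, y) ∈ F) ∧
      ∀ x' y : ℝ, x' < x → (x, y) ∈ F → (x', y) ∉ F}) :
    (D \ D').Countable := by
  classical
  set G : Set (ℝ × ℝ) := {p : ℝ × ℝ | p.1 ∈ D ∧ p.2 = f p.1} with hG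
  set BL := {x | x ∈ D ∧ ∃ q r : ℚ, (q : ℝ) < x ∧ (r : ℝ) < f x ∧
      ∀ t ∈ D, (q : ℝ) < t → t < x → f t < r} with hBL
  set BR := {x | x ∈ D ∧ ∃ q r : ℚ, x < (q : ℝ) ∧ f x < (r : ℝ) ∧
      ∀ t ∈ D, x < t → t < (q : ℝ) → (r : ℝ) < f t} with hBR
  have hcount : (BL ∪ BR).Countable :=
    (bad_left_countable f D).union (bad_right_countable f D)
  refine hcount.mono ?_
  rintro x ⟨hxD, hxD'⟩
  by_contra hxB
  rw [Set.mem_union] at hxB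
  push_neg at hxB
  obtain ⟨hnL, hnR⟩ := hxB
  -- negations: approximation from left and right
  have hL : ∀ a b : ℝ, a < x → b < f x → ∃ t ∈ D, a < t ∧ t < x ∧ b ≤ f t := by
    intro a b ha hb
    obtain ⟨q, hq1, hq2⟩ := exists_rat_btwn ha
    obtain ⟨r, hr1, hr2⟩ := exists_rat_btwn hb
    rw [hBL, Set.mem_setOf_eq] at hnL
    push_neg at hnL
    obtain ⟨t, htD, ht1, ht2, ht3⟩ := hnL hxD q r hq2 hr2
    exact ⟨t, htD, hq1.trans ht1, ht2, hr1.le.trans ht3⟩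
  have hR : ∀ a b : ℝ, x < a → f x < b → ∃ t ∈ D, t < a ∧ x < t ∧ f t ≤ b := by
    intro a b ha hb
    obtain ⟨q, hq1, hq2⟩ := exists_rat_btwn ha
    obtain ⟨r, hr1, hr2⟩ := exists_rat_btwn hb
    rw [hBR, Set.mem_setOf_eq] at hnR
    push_neg at hnR
    obtain ⟨t, htD, ht1, ht2, ht3⟩ := hnR hxD q r hq1 hr1
    exact ⟨t, htD, ht2.trans hq2, ht1, ht3.trans hr2.le⟩
  -- key: the only point of F over x is (x, f x)
  have hmem : (x, f x) ∈ F := by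
    rw [hF]; exact subset_closure ⟨hxD, rfl⟩
  have huniq : ∀ y : ℝ, (x, y) ∈ F → y = f x := by
    intro y hy
    rw [hF] at hy
    have hbound : ∀ ε : ℝ, 0 < ε → |y - f x| ≤ ε := by
      intro ε hε
      obtain ⟨s, hsD, -, hsx, hsf⟩ := hL (x - 1) (f x - ε) (by linarith) (by linarith)
      obtain ⟨u, huD, -, hxu, huf⟩ := hR (x + 1) (f x + ε) (by linarith) (by linarith)
      have hopen : IsOpen ((Set.Ioo s u) ×ˢ (Set.univ : Set ℝ)) :=
        isOpen_Ioo.prod isOpen_univ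
      have hxyo : (x, y) ∈ (Set.Ioo s u) ×ˢ (Set.univ : Set ℝ) :=
        ⟨⟨hsx, hxu⟩, trivial⟩
      have h1 : (x, y) ∈ closure (((Set.Ioo s u) ×ˢ (Set.univ : Set ℝ)) ∩ G) :=
        hopen.inter_closure ⟨hxyo, hy⟩
      have h2 : (((Set.Ioo s u) ×ˢ (Set.univ : Set ℝ)) ∩ G) ⊆
          (Set.univ : Set ℝ) ×ˢ Set.Icc (f s) (f u) := by
        rintro ⟨a, b⟩ ⟨⟨⟨has, hau⟩, -⟩, ⟨haD, hab⟩⟩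
        refine ⟨trivial, ?_, ?_⟩
        · rw [hab]; exact hmono hsD haD has.le
        · rw [hab]; exact hmono haD huD hau.le
      have h3 : (x, y) ∈ (Set.univ : Set ℝ) ×ˢ Set.Icc (f s) (f u) :=
        closure_minimal h2 (isClosed_univ.prod isClosed_Icc) h1
      obtain ⟨-, hy1, hy2⟩ := h3
      rw [abs_sub_le_iff]
      constructor <;> nlinarith
    have : |y - f x| ≤ 0 := le_of_forall_pos_le_add (by
      intro ε hε
      simpa using hbound ε hε)
    have : y - f x = 0 := le_antisymm (le_trans (le_abs_self _) this) (by
      have := neg_abs_le (y - f x); linarith)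
    linarith
  rw [hD', Set.mem_setOf_eq] at hxD'
  push_neg at hxD'
  have hA : (x, x) ∉ F := fun hxx => hnofix x hxD ((huniq x hxx).symm)
  have hB : ∃! y, (x, y) ∈ F := ⟨f x, hmem, huniq⟩
  obtain ⟨x', y, hx', hxy, hx'F⟩ := hxD' hA hB
  · -- third condition
    have hyfx : y = f x := huniq y hxy
    subst hyfx
    rw [hF] at hx'F
    obtain ⟨t, htD, ht1, ht2, -⟩ := hL x' (f x - 1) hx' (by linarith)
    have hopen : IsOpen ((Set.Iio t) ×ˢ (Set.univ : Set ℝ)) :=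
      isOpen_Iio.prod isOpen_univ
    have hx'o : (x', f x) ∈ (Set.Iio t) ×ˢ (Set.univ : Set ℝ) := ⟨ht1, trivial⟩
    have h1 : (x', f x) ∈ closure (((Set.Iio t) ×ˢ (Set.univ : Set ℝ)) ∩ G) :=
      hopen.inter_closure ⟨hx'o, hx'F⟩
    have h2 : (((Set.Iio t) ×ˢ (Set.univ : Set ℝ)) ∩ G) ⊆
        (Set.univ : Set ℝ) ×ˢ Set.Iic (f t) := by
      rintro ⟨a, b⟩ ⟨⟨hat, -⟩, ⟨haD, hab⟩⟩
      exact ⟨trivial, by rw [hab]; exact hmono haD htD (le_of_lt hat)⟩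
    have h3 : (x', f x) ∈ (Set.univ : Set ℝ) ×ˢ Set.Iic (f t) :=
      closure_minimal h2 (isClosed_univ.prod isClosed_Iic) h1
    have hle : f x ≤ f t := h3.2
    have hge : f t ≤ f x := hmono htD hxD ht2.le
    have : t = x := hinj htD hxD (le_antisymm hge hle)
    exact absurd this ht2.ne
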